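/- Let f ∈ S be weighted-homogeneous of degree d, and suppose that for each i ∈ {0,…,n+1} the polynomial f contains, with nonzero coefficient, a monomial of the form x_i^{b_i} or x_i^{b_i}·x_j (j ≠ i) with b_i ≥ 2. Then the group D_f := {(c_0,…,c_{n+1}) ∈ (ℂ^×)^{n+2} : f(c_0 x_0,…,c_{n+1}x_{n+1}) = f} of diagonal substitutions fixing f is finite of order at most d^{n+2}/(a_0·a_1⋯a_{n+1}). -/

import Mathlib

open MvPolynomial

noncomputable section

lemma my_zpow_sum {G : Type*} [CommGroup G] (u : G) {ι : Type*} (s : Finset ι) (g : ι → ℤ) :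
    u ^ (∑ i ∈ s, g i) = ∏ i ∈ s, u ^ g i := by
  classical
  induction s using Finset.induction_on with
  | empty => simp
  | insert _ _ hi ih => simp_all [Finset.sum_insert hi, Finset.prod_insert hi, zpow_add]

lemma my_coeff_scale {σ : Type*} [Fintype σ] (z : σ → ℂ) (p : MvPolynomial σ ℂ) (m : σ →₀ ℕ) :
    coeff m (aeval (fun i => z i • (X i : MvPolynomial σ ℂ)) p)
      = (∏ i, z i ^ m i) * coeff m p := by
  classical
  induction p using MvPolynomial.induction_on' with
  | monomial d r =>
    rw [aeval_monomial, algebraMap_eq]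
    have h2 : (∏ i, (X i : MvPolynomial σ ℂ) ^ d i) = monomial d (1 : ℂ) := by
      rw [← prod_X_pow_eq_monomial]
      exact (Finset.prod_subset (Finset.subset_univ _) (by
        intro x _ hx
        simp only [Finsupp.mem_support_iff, not_not] at hx
        simp [hx])).symm
    have h1 : (d.prod fun i k => (z i • (X i : MvPolynomial σ ℂ)) ^ k)
        = C (∏ i, z i ^ d i) * monomial d 1 := by
      rw [Finsupp.prod_pow]
      simp_rw [smul_eq_C_mul, mul_pow]
      rw [Finset.prod_mul_distrib, h2, map_prod]
      simp [map_pow]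
    rw [h1, ← mul_assoc, ← map_mul, C_mul_monomial, mul_one, coeff_monomial]
    by_cases hdm : d = m
    · subst hdm; simp [coeff_monomial, mul_comm]
    · simp [coeff_monomial, hdm]
  | add p q hp hq =>
    rw [map_add, coeff_add, hp, hq, coeff_add, mul_add]

lemma my_abs_det_le {N : ℕ} (A : Matrix (Fin N) (Fin N) ℤ) (h0 : ∀ i k, 0 ≤ A i k) :
    |A.det| ≤ ∏ j, ∑ i, A i j := by
  classical
  rw [Matrix.det_apply]
  refine le_trans (Finset.abs_sum_le_sum_abs _ _) ?_
  have h1 : ∀ σ : Equiv.Perm (Fin N), |Equiv.Perm.sign σ • ∏ i, A (σ i) i| = ∏ i, A (σ i) i := by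
    intro σ
    rcases Int.units_eq_one_or (Equiv.Perm.sign σ) with h | h <;>
      simp [h, abs_of_nonneg, Finset.prod_nonneg fun i _ => h0 _ _]
  simp_rw [h1]
  have h2 : ∑ σ : Equiv.Perm (Fin N), ∏ i, A (σ i) i
      ≤ ∑ f ∈ (Finset.univ : Finset (Fin N → Fin N)), ∏ i, A (f i) i := by
    rw [← Finset.sum_image (g := fun σ : Equiv.Perm (Fin N) => ⇑σ)
      (f := fun f : Fin N → Fin N => ∏ i, A (f i) i)
      (fun x _ y _ h => Equiv.coe_fn_injective h)]
    exact Finset.sum_le_sum_of_subset_of_nonneg (Finset.subset_univ _)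
      (fun f _ _ => Finset.prod_nonneg fun i _ => h0 _ _)
  refine h2.trans ?_
  rw [Finset.prod_univ_sum (fun _ => (Finset.univ : Finset (Fin N))) (fun j i => A i j)]
  rw [Fintype.piFinset_univ]

lemma my_mulVec_inj {N : ℕ} (M : Matrix (Fin N) (Fin N) ℤ) (hM : M.det ≠ 0) :
    Function.Injective M.mulVecLin := by
  intro v w hvw
  have h2 : M.mulVec v = M.mulVec w := hvw
  have h3 : M.adjugate.mulVec (M.mulVec v) = M.adjugate.mulVec (M.mulVec w) := by rw [h2]
  rw [Matrix.mulVec_mulVec, Matrix.mulVec_mulVec, Matrix.adjugate_mul,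
    Matrix.smul_mulVec, Matrix.smul_mulVec, Matrix.one_mulVec,
    Matrix.one_mulVec] at h3
  funext k
  have h4 := congrFun h3 k
  simp only [Pi.smul_apply, smul_eq_mul] at h4
  exact mul_left_cancel₀ hM h4

lemma my_index_eq {N : ℕ} (M : Matrix (Fin N) (Fin N) ℤ) (hM : M.det ≠ 0) :
    (LinearMap.range M.mulVecLin).toAddSubgroup.index = M.det.natAbs := by
  classical
  set g := M.mulVecLin with hgdef
  have hg : Function.Injective g := my_mulVec_inj M hM
  obtain ⟨n, snf⟩ := (LinearMap.range g).smithNormalForm (Pi.basisFun ℤ (Fin N))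
  set e2 : (Fin N → ℤ) ≃ₗ[ℤ] LinearMap.range g := LinearEquiv.ofInjective g hg with he2
  have hn : N = n := by
    symm
    have e3 : Module.Basis (Fin N) ℤ (LinearMap.range g) := (Pi.basisFun ℤ (Fin N)).map e2
    simpa using Fintype.card_congr (snf.bN.indexEquiv e3)
  subst hn
  have hidx : (LinearMap.range g).toAddSubgroup.index = (∏ i, snf.a i).natAbs := by
    rw [snf.toAddSubgroup_index_eq_pow_mul_prod]
    simp only [Ideal.span_singleton_toAddSubgroup_eq_zmultiples, Int.index_zmultiples]
    simp only [Fintype.card_fin, Nat.sub_self, pow_zero, one_mul]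
    induction (Finset.univ : Finset (Fin N)) using Finset.induction_on with
    | empty => simp
    | insert _ _ hi ih => simp [Finset.prod_insert hi, Int.natAbs_mul, ih]
  rw [hidx]
  -- now relate ∏ a to det M
  have hbij : Function.Bijective snf.f := Finite.injective_iff_bijective.mp snf.f.injective
  set σe : Fin N ≃ Fin N := Equiv.ofBijective snf.f hbij with hσe
  set e₁ : (Fin N → ℤ) ≃ₗ[ℤ] LinearMap.range g := snf.bM.equiv snf.bN σe.symm with he₁
  set h : (Fin N → ℤ) →ₗ[ℤ] (Fin N → ℤ) :=
    (LinearMap.range g).subtype ∘ₗ (e₁ : (Fin N → ℤ) →ₗ[ℤ] LinearMap.range g) with hh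
  have hdiag : LinearMap.toMatrix snf.bM snf.bM h
      = Matrix.diagonal (fun i => snf.a (σe.symm i)) := by
    ext i j
    rw [LinearMap.toMatrix_apply]
    have h1 : h (snf.bM j) = (snf.bN (σe.symm j) : Fin N → ℤ) := by
      simp [hh, he₁, Module.Basis.equiv_apply]
    have h2 : (snf.bN (σe.symm j) : Fin N → ℤ) = snf.a (σe.symm j) • snf.bM j := by
      rw [snf.snf]
      congr 1
      show snf.bM (σe (σe.symm j)) = snf.bM j
      rw [Equiv.apply_symm_apply]
    rw [h1, h2, map_smul]
    simp only [Module.Basis.repr_self, Finsupp.smul_single, smul_eq_mul, mul_one,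
      Finsupp.single_apply, Matrix.diagonal_apply]
    by_cases hij : i = j
    · simp [hij]
    · simp [hij, Ne.symm hij]
  have hdeth : LinearMap.det h = ∏ i, snf.a i := by
    rw [← LinearMap.det_toMatrix snf.bM, hdiag, Matrix.det_diagonal]
    exact Fintype.prod_equiv σe.symm _ _ fun i => rfl
  have hge : (LinearMap.range g).subtype ∘ₗ (e2 : (Fin N → ℤ) →ₗ[ℤ] LinearMap.range g) = g := by
    exact LinearMap.ext fun v => LinearEquiv.ofInjective_apply (h := hg) g v
  have hassoc : Associated (LinearMap.det g) (LinearMap.det h) := by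
    have h5 := LinearMap.associated_det_comp_equiv (LinearMap.range g).subtype e2 e₁
    rw [hge] at h5
    exact h5
  have := Int.natAbs_eq_iff_associated.mpr hassoc
  rw [hdeth] at this
  rw [← this]
  congr 1
  rw [hgdef, ← Matrix.toLin'_apply', LinearMap.det_toLin']

lemma my_zpow_sum0 {x : ℂ} (hx : x ≠ 0) {ι : Type*} (s : Finset ι) (g : ι → ℤ) :
    x ^ (∑ i ∈ s, g i) = ∏ i ∈ s, x ^ g i := by
  classical
  induction s using Finset.induction_on with
  | empty => simp
  | insert _ _ hi ih => simp_all [Finset.sum_insert hi, Finset.prod_insert hi, zpow_add₀ hx]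

lemma my_stab_card {N : ℕ} (M : Matrix (Fin N) (Fin N) ℤ) (hM : M.det ≠ 0)
    {p : (Fin N → ℂˣ) → Prop}
    (hrel : ∀ c, p c → ∀ i, (∏ k, (c k) ^ (M i k)) = 1) :
    Finite {c // p c} ∧ Nat.card {c // p c} ≤ M.det.natAbs := by
  classical
  set D := M.det.natAbs with hDdef
  have hD : D ≠ 0 := Int.natAbs_ne_zero.mpr hM
  haveI : NeZero D := ⟨hD⟩
  -- step 1 : each coordinate is a D-th root of unity
  have hpow : ∀ c, p c → ∀ k, (c k) ^ M.det = 1 := by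
    intro c hc k
    have h2 : ∏ i, (∏ l, c l ^ (M i l)) ^ (M.adjugate k i) = 1 := by
      rw [Finset.prod_congr rfl (fun i _ => by rw [hrel c hc i, one_zpow])]
      simp
    have h3 : ∀ i : Fin N, (∏ l, c l ^ (M i l)) ^ (M.adjugate k i)
        = ∏ l, c l ^ (M.adjugate k i * M i l) := by
      intro i
      rw [← Finset.prod_zpow]
      exact Finset.prod_congr rfl fun l _ => by rw [← zpow_mul, mul_comm (M i l)]
    rw [Finset.prod_congr rfl fun i _ => h3 i, Finset.prod_comm] at h2
    have h4 : ∀ l, ∏ i, c l ^ (M.adjugate k i * M i l) = c l ^ ((M.adjugate * M) k l) := by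
      intro l
      rw [Matrix.mul_apply, my_zpow_sum]
    rw [Finset.prod_congr rfl fun l _ => h4 l] at h2
    have h5 : ∀ l : Fin N, c l ^ ((M.adjugate * M) k l)
        = if l = k then c l ^ M.det else 1 := by
      intro l
      rw [Matrix.adjugate_mul, Matrix.smul_apply, Matrix.one_apply]
      by_cases h : l = k
      · subst h; simp
      · rw [if_neg (fun hh => h hh.symm), if_neg h, smul_zero, zpow_zero]
    rw [Finset.prod_congr rfl fun l _ => h5 l] at h2
    rwa [Finset.prod_ite_eq' Finset.univ k (fun l => c l ^ M.det), if_pos (Finset.mem_univ k)]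
      at h2
  have hpowD : ∀ c, p c → ∀ k, ((c k : ℂ)) ^ D = 1 := by
    intro c hc k
    have h1 : (c k) ^ (D : ℤ) = 1 := by
      rcases Int.natAbs_eq M.det with h | h
      · rw [← hDdef] at h; rw [← h]; exact hpow c hc k
      · rw [← hDdef] at h
        have := hpow c hc k
        rw [h, zpow_neg] at this
        rw [← inv_inv ((c k) ^ (D:ℤ)), this, inv_one]
    have h2 : (c k) ^ D = 1 := by rwa [zpow_natCast] at h1
    calc ((c k : ℂ)) ^ D = (((c k) ^ D : ℂˣ) : ℂ) := by rw [Units.val_pow_eq_pow_val]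
    _ = 1 := by rw [h2]; rfl
  set ζ : ℂ := Complex.exp (2 * Real.pi * Complex.I / D) with hζdef
  have hζ : IsPrimitiveRoot ζ D := Complex.isPrimitiveRoot_exp D hD
  have hζ0 : ζ ≠ 0 := Complex.exp_ne_zero _
  have hexists : ∀ c : {c // p c}, ∀ k, ∃ m : ℕ, ζ ^ m = (c.1 k : ℂ) := by
    intro c k
    obtain ⟨i, _, hi⟩ := hζ.eq_pow_of_pow_eq_one (hpowD c.1 c.2 k)
    exact ⟨i, hi⟩
  set g : {c // p c} → Fin N → ℕ := fun c k => (hexists c k).choose with hgdef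
  have hgc : ∀ c k, ζ ^ (g c k) = (c.1 k : ℂ) := fun c k => (hexists c k).choose_spec
  have hdvd : ∀ (c : {c // p c}) i, (D : ℤ) ∣ ∑ k, M i k * (g c k : ℤ) := by
    intro c i
    have h1 : ∏ k, (c.1 k : ℂ) ^ (M i k) = 1 := by
      calc ∏ k, (c.1 k : ℂ) ^ (M i k)
          = ∏ k, ((c.1 k ^ (M i k) : ℂˣ) : ℂ) :=
            Finset.prod_congr rfl fun k _ => (Units.val_zpow_eq_zpow_val _ _).symm
        _ = ((∏ k, c.1 k ^ (M i k) : ℂˣ) : ℂ) := (map_prod (Units.coeHom ℂ) _ _).symm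
        _ = 1 := by rw [hrel c.1 c.2 i]; rfl
    have h2 : ∀ k : Fin N, (c.1 k : ℂ) ^ (M i k) = ζ ^ (M i k * (g c k : ℤ)) := by
      intro k
      rw [← hgc c k, ← zpow_natCast ζ (g c k), ← zpow_mul, mul_comm ((g c k : ℤ))]
    rw [Finset.prod_congr rfl fun k _ => h2 k, ← my_zpow_sum0 hζ0] at h1
    exact (hζ.zpow_eq_one_iff_dvd _).mp h1
  set y : {c // p c} → Fin N → ℤ := fun c i => (∑ k, M i k * (g c k : ℤ)) / D with hydef
  have hy : ∀ c, M.mulVec (fun k => (g c k : ℤ)) = (D : ℤ) • y c := by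
    intro c
    funext i
    simp only [Matrix.mulVec, dotProduct, Pi.smul_apply, smul_eq_mul, hydef]
    exact (Int.mul_ediv_cancel' (hdvd c i)).symm
  set Φ : {c // p c} → (Fin N → ℤ) ⧸ (LinearMap.range M.mulVecLin).toAddSubgroup :=
    fun c => QuotientAddGroup.mk (y c) with hΦdef
  have hinj : Function.Injective Φ := by
    intro c c' hcc
    have h1 : -(y c) + y c' ∈ (LinearMap.range M.mulVecLin).toAddSubgroup :=
      QuotientAddGroup.eq.mp hcc
    rw [Submodule.mem_toAddSubgroup, LinearMap.mem_range] at h1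
    obtain ⟨z, hz⟩ := h1
    have hz' : M.mulVec z = -(y c) + y c' := hz
    have h2 : M.mulVec ((fun k => (g c' k : ℤ)) - (fun k => (g c k : ℤ)) - (D : ℤ) • z) = 0 := by
      rw [Matrix.mulVec_sub, Matrix.mulVec_sub, Matrix.mulVec_smul, hy, hy, hz']
      funext i
      simp only [Pi.sub_apply, Pi.smul_apply, Pi.add_apply, Pi.neg_apply, Pi.zero_apply,
        smul_eq_mul]
      ring
    have h3 : (fun k => (g c' k : ℤ)) - (fun k => (g c k : ℤ)) - (D : ℤ) • z = 0 := by
      apply my_mulVec_inj M hM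
      rw [map_zero]
      exact h2
    have h4 : ∀ k, (g c' k : ℤ) - (g c k : ℤ) = (D : ℤ) * z k := by
      intro k
      have := congrFun h3 k
      simp only [Pi.sub_apply, Pi.smul_apply, Pi.zero_apply, smul_eq_mul] at this
      linarith
    have h5 : ∀ k, (c.1 k : ℂ) = (c'.1 k : ℂ) := by
      intro k
      rw [← hgc c k, ← hgc c' k]
      have hdvd2 : (D : ℤ) ∣ (g c' k : ℤ) - (g c k : ℤ) := ⟨z k, h4 k⟩
      have h6 : ζ ^ ((g c' k : ℤ) - (g c k : ℤ)) = 1 := (hζ.zpow_eq_one_iff_dvd _).mpr hdvd2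
      rw [zpow_sub₀ hζ0, div_eq_one_iff_eq (zpow_ne_zero _ hζ0)] at h6
      rw [← zpow_natCast ζ (g c k), ← zpow_natCast ζ (g c' k), h6]
    have h7 : c.1 = c'.1 := funext fun k => Units.ext (h5 k)
    exact Subtype.ext h7
  have hcard : Nat.card ((Fin N → ℤ) ⧸ (LinearMap.range M.mulVecLin).toAddSubgroup) = D := by
    rw [hDdef, ← my_index_eq M hM]
    rfl
  have hfin : Finite ((Fin N → ℤ) ⧸ (LinearMap.range M.mulVecLin).toAddSubgroup) := by
    have : Nat.card ((Fin N → ℤ) ⧸ (LinearMap.range M.mulVecLin).toAddSubgroup) ≠ 0 := by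
      rw [hcard]; exact hD
    exact (Nat.card_ne_zero.mp this).2
  refine ⟨Finite.of_injective Φ hinj, ?_⟩
  have := Nat.card_le_card_of_injective Φ hinj
  rwa [hcard] at this

/-- If, for each `i`, the weighted-homogeneous polynomial `f` of degree `d`
contains with nonzero coefficient a monomial `x_i^{b_i}` or `x_i^{b_i}·x_j` (`j ≠ i`) with
`b_i ≥ 2`, then the group of diagonal substitutions fixing `f` is finite of order at most
`d^{n+2}/(a_0⋯a_{n+1})`. -/
theorem diagonal_stabilizer_bound {n : ℕ} (a : Fin (n + 2) → ℕ) (ha : ∀ i, 0 < a i)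
    (d : ℕ) (f : MvPolynomial (Fin (n + 2)) ℂ) (hfh : f.IsWeightedHomogeneous a d)
    (hmon : ∀ i : Fin (n + 2), ∃ b : ℕ, 2 ≤ b ∧
      (coeff (Finsupp.single i b) f ≠ 0 ∨
        ∃ j : Fin (n + 2), j ≠ i ∧ coeff (Finsupp.single i b + Finsupp.single j 1) f ≠ 0)) :
    Finite {c : Fin (n + 2) → ℂˣ //
        aeval (fun i => ((c i : ℂ)) • (X i : MvPolynomial (Fin (n + 2)) ℂ)) f = f} ∧
      (Nat.card {c : Fin (n + 2) → ℂˣ //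
          aeval (fun i => ((c i : ℂ)) • (X i : MvPolynomial (Fin (n + 2)) ℂ)) f = f} : ℝ)
        ≤ (d : ℝ) ^ (n + 2) / ∏ i, (a i : ℝ) := by
  classical
  -- Step A : uniform monomial data
  have hmon' : ∀ i : Fin (n+2), ∃ b : ℕ, ∃ j : Fin (n+2), ∃ ε : ℕ,
      2 ≤ b ∧ ε ≤ 1 ∧ coeff (Finsupp.single i b + Finsupp.single j ε) f ≠ 0 := by
    intro i
    obtain ⟨b, hb2, hcase⟩ := hmon i
    rcases hcase with h | ⟨j, _, h⟩
    · exact ⟨b, i, 0, hb2, Nat.zero_le 1, by simpa using h⟩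
    · exact ⟨b, j, 1, hb2, le_refl 1, h⟩
  choose b j ε hb hε hc using hmon'
  -- Step B : degree identities
  have hws : ∀ (i : Fin (n+2)) (m : ℕ), (Finsupp.weight a) (Finsupp.single i m) = m * a i := by
    intro i m
    rw [Finsupp.weight_apply, Finsupp.sum_single_index] <;> simp
  have hdeg : ∀ i, b i * a i + ε i * a (j i) = d := by
    intro i
    have h1 := hfh (hc i)
    rw [map_add, hws, hws] at h1
    exact h1
  -- Step C : the matrix of relations
  set M : Matrix (Fin (n+2)) (Fin (n+2)) ℤ :=
    Matrix.of fun i k => (((Finsupp.single i (b i) + Finsupp.single (j i) (ε i)) k : ℕ) : ℤ)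
    with hMdef
  have hM0 : ∀ i k, 0 ≤ M i k := fun i k => Int.natCast_nonneg _
  have hMkk : ∀ i, (b i : ℤ) ≤ M i i := by
    intro i
    show (b i : ℤ) ≤ (((Finsupp.single i (b i) + Finsupp.single (j i) (ε i)) i : ℕ) : ℤ)
    rw [Finsupp.add_apply, Finsupp.single_eq_same]
    push_cast
    simp
  have hrowsum : ∀ i, ∑ k, M i k = (b i : ℤ) + (ε i : ℤ) := by
    intro i
    show ∑ k, (((Finsupp.single i (b i) + Finsupp.single (j i) (ε i)) k : ℕ) : ℤ) = _
    simp only [Finsupp.add_apply, Finsupp.single_apply]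
    push_cast
    rw [Finset.sum_add_distrib]
    congr 1 <;> simp [Finset.sum_ite_eq]
  -- Step D : non-vanishing determinant via diagonal dominance
  have hdet : M.det ≠ 0 := by
    intro h0
    obtain ⟨v, hv0, hvz⟩ := Matrix.exists_mulVec_eq_zero_iff.mpr h0
    obtain ⟨k, -, hk⟩ := Finset.exists_max_image Finset.univ (fun k => |v k|)
      Finset.univ_nonempty
    have hvk : 0 < |v k| := by
      obtain ⟨l, hl⟩ : ∃ l, v l ≠ 0 := Function.ne_iff.mp hv0
      have := hk l (Finset.mem_univ l)
      have h2 : 0 < |v l| := abs_pos.mpr hl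
      linarith
    have hsum : M k k * v k + ∑ l ∈ Finset.univ.erase k, M k l * v l = 0 := by
      rw [Finset.add_sum_erase _ (fun l => M k l * v l) (Finset.mem_univ k)]
      exact congrFun hvz k
    have hoff : ∑ l ∈ Finset.univ.erase k, M k l ≤ 1 := by
      have h1 : ∑ l ∈ Finset.univ.erase k, M k l = (∑ l, M k l) - M k k :=
        Finset.sum_erase_eq_sub (Finset.mem_univ k)
      rw [h1, hrowsum k]
      have := hMkk k
      have hε1 : (ε k : ℤ) ≤ 1 := by exact_mod_cast hε k
      linarith
    have habs : |M k k * v k| ≤ |v k| := by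
      calc |M k k * v k| = |∑ l ∈ Finset.univ.erase k, M k l * v l| := by
            rw [show M k k * v k = -∑ l ∈ Finset.univ.erase k, M k l * v l by linarith]
            rw [abs_neg]
        _ ≤ ∑ l ∈ Finset.univ.erase k, |M k l * v l| := Finset.abs_sum_le_sum_abs _ _
        _ ≤ ∑ l ∈ Finset.univ.erase k, M k l * |v k| := by
            refine Finset.sum_le_sum fun l _ => ?_
            rw [abs_mul, abs_of_nonneg (hM0 k l)]
            exact mul_le_mul_of_nonneg_left (hk l (Finset.mem_univ l)) (hM0 k l)
        _ = (∑ l ∈ Finset.univ.erase k, M k l) * |v k| := by rw [Finset.sum_mul]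
        _ ≤ 1 * |v k| := mul_le_mul_of_nonneg_right hoff (abs_nonneg _)
        _ = |v k| := one_mul _
    have h2 : (2 : ℤ) * |v k| ≤ |M k k * v k| := by
      rw [abs_mul, abs_of_nonneg (hM0 k k)]
      refine mul_le_mul_of_nonneg_right ?_ (abs_nonneg _)
      have := hMkk k
      have hb2 : (2 : ℤ) ≤ (b k : ℤ) := by exact_mod_cast hb k
      linarith
    linarith
  -- Step E : relations for stabilizer elements
  have hrel : ∀ c : Fin (n+2) → ℂˣ,
      (aeval (fun i => ((c i : ℂ)) • (X i : MvPolynomial (Fin (n + 2)) ℂ)) f = f) →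
      ∀ i, ∏ k, (c k) ^ (M i k) = 1 := by
    intro c hcf i
    have h1 := my_coeff_scale (fun i => (c i : ℂ)) f
      (Finsupp.single i (b i) + Finsupp.single (j i) (ε i))
    rw [hcf] at h1
    have h2 : (∏ k, (c k : ℂ) ^ ((Finsupp.single i (b i) + Finsupp.single (j i) (ε i)) k)) = 1 := by
      have h3 := h1.symm
      nth_rewrite 2 [show coeff (Finsupp.single i (b i) + Finsupp.single (j i) (ε i)) f
        = 1 * coeff (Finsupp.single i (b i) + Finsupp.single (j i) (ε i)) f from
        (one_mul _).symm] at h3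
      exact mul_right_cancel₀ (hc i) h3
    apply Units.ext
    calc ((∏ k, (c k) ^ (M i k) : ℂˣ) : ℂ)
        = ∏ k, ((c k ^ (M i k) : ℂˣ) : ℂ) := map_prod (Units.coeHom ℂ) _ _
      _ = ∏ k, (c k : ℂ) ^ (M i k) :=
          Finset.prod_congr rfl fun k _ => Units.val_zpow_eq_zpow_val _ _
      _ = ∏ k, (c k : ℂ) ^ ((Finsupp.single i (b i) + Finsupp.single (j i) (ε i)) k) :=
          Finset.prod_congr rfl fun k _ => by rw [hMdef]; push_cast [zpow_natCast]; rfl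
      _ = 1 := h2
  -- Step F : apply the counting lemma
  obtain ⟨hfin, hcard⟩ := my_stab_card M hdet hrel
  refine ⟨hfin, ?_⟩
  -- Step G : bound the determinant
  have hB : ((Matrix.of fun i k => ((a k : ℤ)) * M i k).det) = (∏ i, (a i : ℤ)) * M.det :=
    Matrix.det_mul_row _ _
  have hBrow : ∀ i, ∑ k, ((a k : ℤ)) * M i k = (d : ℤ) := by
    intro i
    have h1 : (Finsupp.weight a) (Finsupp.single i (b i) + Finsupp.single (j i) (ε i)) = d :=
      hfh (hc i)
    rw [Finsupp.weight_apply, Finsupp.sum_fintype _ _ (by simp)] at h1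
    calc ∑ k, ((a k : ℤ)) * M i k
        = ((∑ k, (Finsupp.single i (b i) + Finsupp.single (j i) (ε i)) k • a k : ℕ) : ℤ) := by
          push_cast
          exact Finset.sum_congr rfl fun k _ => by
            simp only [hMdef, Matrix.of_apply, smul_eq_mul]; push_cast; ring
      _ = (d : ℤ) := by rw [h1]
  have hdetle : (M.det.natAbs : ℤ) * (∏ i, (a i : ℤ)) ≤ (d : ℤ) ^ (n + 2) := by
    have h1 := my_abs_det_le (Matrix.of fun i k => ((a k : ℤ)) * M i k).transpose
      (fun i k => mul_nonneg (Int.natCast_nonneg _) (hM0 k i))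
    rw [Matrix.det_transpose, hB] at h1
    have h2 : ∀ j_1 : Fin (n+2), ∑ i, (Matrix.of fun i k => ((a k : ℤ)) * M i k).transpose i j_1
        = (d : ℤ) := by
      intro j1
      rw [show ∑ i, (Matrix.of fun i k => ((a k : ℤ)) * M i k).transpose i j1
        = ∑ i, ((a i : ℤ)) * M j1 i from rfl]
      exact hBrow j1
    rw [Finset.prod_congr rfl fun j1 _ => h2 j1, Finset.prod_const] at h1
    have h3 : |(∏ i, (a i : ℤ)) * M.det| = (∏ i, (a i : ℤ)) * |M.det| := by
      rw [abs_mul, abs_of_nonneg (Finset.prod_nonneg fun i _ => Int.natCast_nonneg _)]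
    rw [h3] at h1
    rw [Int.abs_eq_natAbs] at h1
    calc (M.det.natAbs : ℤ) * (∏ i, (a i : ℤ))
        = (∏ i, (a i : ℤ)) * (M.det.natAbs : ℤ) := mul_comm _ _
      _ ≤ (d : ℤ) ^ (Fintype.card (Fin (n+2))) := h1
      _ = (d : ℤ) ^ (n + 2) := by rw [Fintype.card_fin]
  -- Step H : conclude over ℝ
  have hprodpos : (0 : ℝ) < ∏ i, (a i : ℝ) :=
    Finset.prod_pos fun i _ => by exact_mod_cast ha i
  rw [le_div_iff₀ hprodpos]
  have hcast : (Nat.card {c : Fin (n + 2) → ℂˣ //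
      aeval (fun i => ((c i : ℂ)) • (X i : MvPolynomial (Fin (n + 2)) ℂ)) f = f} : ℝ)
      ≤ (M.det.natAbs : ℝ) := by exact_mod_cast hcard
  have hdetle' : (M.det.natAbs : ℝ) * (∏ i, (a i : ℝ)) ≤ (d : ℝ) ^ (n + 2) := by
    have := hdetle
    have h4 : ((M.det.natAbs : ℤ) : ℝ) * ((∏ i, (a i : ℤ)) : ℝ) ≤ (((d : ℤ) ^ (n+2) : ℤ) : ℝ) := by
      exact_mod_cast this
    push_cast at h4 ⊢
    rw [Nat.cast_natAbs, Int.cast_abs]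
    convert h4 using 3
    exact RingHom.map_det (Int.castRingHom ℝ) M
  calc (Nat.card _ : ℝ) * ∏ i, (a i : ℝ)
      ≤ (M.det.natAbs : ℝ) * ∏ i, (a i : ℝ) :=
        mul_le_mul_of_nonneg_right hcast (le_of_lt hprodpos)
    _ ≤ (d : ℝ) ^ (n + 2) := hdetle'

end
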